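/- Let W be a complete discrete valuation ring of characteristic p with uniformizer μ, algebraically closed residue field and normalized valuation ν. Let q = p^e, r ≥ 2, 1 ≤ j ≤ r−1, t ∈ W, and g'_1, …, g'_{r−1} ∈ W. Set φ = tX + X^{q^j} + X^{q^r} and φ' = tX + Σ_{i=1}^{r−1} g'_i X^{q^i} + X^{q^r} in W[X]; write g_j = 1 and g_i = 0 for i ≠ j (1 ≤ i ≤ r−1). For n ≥ 1 let Iso_n be the set of q-polynomials u over W/(μ^n) that are compositional units and satisfy u∘φ̄ = φ̄'∘u (bars denoting reduction of coefficients modulo μ^n). Then for all nonnegative integers δ_1, …, δ_{r−1} and positive δ_r with Σ_{i=1}^{r−1} δ_i(q^i−1) = δ_r(q^r−1), one has in ℕ∪{∞}: gcd(q^r−1, q^j−1)·ν(g_1^{δ_1}⋯g_{r−1}^{δ_{r−1}} − (g'_1)^{δ_1}⋯(g'_{r−1})^{δ_{r−1}}) ≥ (Σ_{1≤i≤r−1, i≠j} δ_i)·Σ_{n≥1} #Iso_n. -/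

import Mathlib

set_option maxHeartbeats 1000000


/-- A `q`-polynomial: all nonzero coefficients sit in degrees that are powers of `q`. -/
def IsqPoly (q : ℕ) {R : Type*} [Semiring R] (f : Polynomial R) : Prop :=
  ∀ n ∈ f.support, ∃ i : ℕ, n = q ^ i

/-- The set of isomorphisms from `φ` to `ψ` over `R`: `q`-polynomials that are
compositional units and intertwine `φ` and `ψ`. -/
def IsoSet (q : ℕ) {R : Type*} [CommRing R] (φ ψ : Polynomial R) : Set (Polynomial R) :=
  {u | IsqPoly q u ∧
    (∃ v : Polynomial R, IsqPoly q v ∧ u.comp v = Polynomial.X ∧ v.comp u = Polynomial.X) ∧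
    u.comp φ = ψ.comp u}

lemma nilp_fix {A : Type*} [CommRing A] {x : A} (hx : IsNilpotent x) {s : ℕ} (hs : 2 ≤ s)
    (hfix : x = x ^ s) : x = 0 := by
  obtain ⟨k, hk⟩ := hx
  have iter : ∀ m : ℕ, x = x ^ s ^ m := by
    intro m
    induction m with
    | zero => simp
    | succ m ih =>
      calc x = x ^ s := hfix
      _ = (x ^ s ^ m) ^ s := by rw [← ih]
      _ = x ^ s ^ (m + 1) := by rw [← pow_mul, pow_succ]
  have hks : k ≤ s ^ k := (Nat.lt_pow_self (n := k) hs).le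
  calc x = x ^ s ^ k := iter k
  _ = x ^ k * x ^ (s ^ k - k) := by rw [← pow_add]; congr 1; omega
  _ = 0 := by rw [hk, zero_mul]

open Polynomial Finset in
lemma sum_comp' {A : Type*} [CommRing A] {ι : Type*} (s : Finset ι) (f : ι → Polynomial A)
    (u : Polynomial A) : (∑ i ∈ s, f i).comp u = ∑ i ∈ s, (f i).comp u := by
  simp only [Polynomial.comp, Polynomial.eval₂_finset_sum]

open Polynomial Finset in
lemma key_lemma {A F : Type*} [CommRing A] [Nontrivial A] [Field F] (ρ : A →+* F)
    (hnil : ∀ a : A, ρ a = 0 → IsNilpotent a)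
    {q r j : ℕ} (hq : 2 ≤ q) (hj1 : 1 ≤ j) (hjr : j < r)
    (t : A) (h : ℕ → A) {u : Polynomial A}
    (hu : u ∈ IsoSet q (C t * X + X ^ q ^ j + X ^ q ^ r)
      (C t * X + (∑ i ∈ Finset.Icc 1 (r - 1), C (h i) * X ^ q ^ i) + X ^ q ^ r)) :
    ∃ c : A, IsUnit c ∧ u = C c * X ∧ (∀ i, 1 ≤ i → i ≤ r - 1 → i ≠ j → h i = 0) ∧
      c = h j * c ^ q ^ j ∧ c = c ^ q ^ r := by
  obtain ⟨hqp, ⟨v, hqv, huv, hvu⟩, hcomm⟩ := hu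
  set φA : Polynomial A := C t * X + X ^ q ^ j + X ^ q ^ r with hφA
  set ψA : Polynomial A := C t * X + (∑ i ∈ Finset.Icc 1 (r - 1), C (h i) * X ^ q ^ i) + X ^ q ^ r
    with hψA
  have hq1 : 1 < q := hq
  have hpowinj : ∀ {a b : ℕ}, q ^ a = q ^ b → a = b := fun hab =>
    Nat.pow_right_injective hq hab
  have hpowlt : ∀ {a b : ℕ}, a < b → q ^ a < q ^ b := fun hab =>
    Nat.pow_lt_pow_right hq1 hab
  have h1j : 1 < q ^ j := by
    have := hpowlt (show 0 < j from hj1); simpa using this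
  have h1r : 1 < q ^ r := by
    have := hpowlt (show 0 < r from by omega); simpa using this
  have hjr' : q ^ j < q ^ r := hpowlt hjr
  have ne1j : (1:ℕ) ≠ q ^ j := by omega
  have ne1r : (1:ℕ) ≠ q ^ r := by omega
  have nerj : q ^ r ≠ q ^ j := by omega
  have nejr : q ^ j ≠ q ^ r := by omega
  -- coefficient facts for φA
  have hφr : φA.coeff (q ^ r) = 1 := by
    simp [hφA, coeff_add, coeff_C_mul, coeff_X, coeff_X_pow, ne1r, nerj]
  have hφdeg : φA.natDegree = q ^ r := by
    apply le_antisymm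
    · refine (natDegree_add_le _ _).trans (max_le ((natDegree_add_le _ _).trans (max_le ?_ ?_)) ?_)
      · exact (natDegree_C_mul_le _ _).trans (by simp; omega)
      · simp [natDegree_X_pow]; omega
      · simp [natDegree_X_pow]
    · exact le_natDegree_of_ne_zero (by rw [hφr]; exact one_ne_zero)
  have hφmonic : φA.leadingCoeff = 1 := by
    rw [leadingCoeff, hφdeg, hφr]
  -- sum coefficient facts
  have hSc : ∀ (f : ℕ → A) (i₀ : ℕ), i₀ ∈ Finset.Icc 1 (r-1) →
      (∑ i ∈ Finset.Icc 1 (r-1), C (f i) * X ^ q ^ i).coeff (q ^ i₀) = f i₀ := by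
    intro f i₀ hi₀
    rw [finset_sum_coeff, Finset.sum_eq_single_of_mem i₀ hi₀]
    · simp [coeff_C_mul, coeff_X_pow]
    · intro b hb hne
      have : ¬ q ^ i₀ = q ^ b := fun hh => hne (hpowinj hh).symm
      simp [coeff_C_mul, coeff_X_pow, this]
  have hS1 : ∀ (f : ℕ → A),
      (∑ i ∈ Finset.Icc 1 (r-1), C (f i) * X ^ q ^ i).coeff 1 = 0 := by
    intro f
    rw [finset_sum_coeff]
    refine Finset.sum_eq_zero fun b hb => ?_
    have hb1 : 1 ≤ b := (Finset.mem_Icc.mp hb).1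
    have : ¬ (1 : ℕ) = q ^ b := by have := hpowlt (show 0 < b from hb1); simp at this; omega
    simp [coeff_C_mul, coeff_X_pow, this]
  have hSr : ∀ (f : ℕ → A),
      (∑ i ∈ Finset.Icc 1 (r-1), C (f i) * X ^ q ^ i).coeff (q ^ r) = 0 := by
    intro f
    rw [finset_sum_coeff]
    refine Finset.sum_eq_zero fun b hb => ?_
    have hb2 : b ≤ r - 1 := (Finset.mem_Icc.mp hb).2
    have : ¬ q ^ r = q ^ b := by have := hpowlt (show b < r by omega); omega
    simp [coeff_C_mul, coeff_X_pow, this]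
  have hψr : ψA.coeff (q ^ r) = 1 := by
    simp only [hψA, coeff_add, hSr]
    simp [coeff_C_mul, coeff_X, ne1r]
  have hψdeg : ψA.natDegree = q ^ r := by
    apply le_antisymm
    · refine (natDegree_add_le _ _).trans (max_le ((natDegree_add_le _ _).trans (max_le ?_ ?_)) ?_)
      · exact (natDegree_C_mul_le _ _).trans (by simp; omega)
      · refine natDegree_sum_le_of_forall_le _ _ fun i hi => ?_
        refine (natDegree_C_mul_le _ _).trans ?_
        simp only [natDegree_X_pow]
        exact Nat.pow_le_pow_right (by omega) (by have := (Finset.mem_Icc.mp hi).2; omega)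
      · simp [natDegree_X_pow]
    · exact le_natDegree_of_ne_zero (by rw [hψr]; exact one_ne_zero)
  have hψmonic : ψA.leadingCoeff = 1 := by rw [leadingCoeff, hψdeg, hψr]
  -- u is nonzero with nonzero degree
  have hu0 : u ≠ 0 := by
    intro h0
    rw [h0, zero_comp] at huv
    exact X_ne_zero huv.symm
  have hcoeff0 : u.coeff 0 = 0 := by
    by_contra hc
    obtain ⟨i, hi⟩ := hqp 0 (mem_support_iff.mpr hc)
    have := pow_pos (show 0 < q by omega) i
    omega
  have hD0 : u.natDegree ≠ 0 := by
    intro hD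
    have := eq_C_of_natDegree_eq_zero hD
    rw [hcoeff0, map_zero] at this
    exact hu0 this
  -- leading coefficient equation
  have hlead : u.leadingCoeff = u.leadingCoeff ^ q ^ r := by
    have h1 := coeff_comp_degree_mul_degree (p := u) (q := φA) (by rw [hφdeg]; omega)
    have h2 := coeff_comp_degree_mul_degree (p := ψA) (q := u) hD0
    rw [hcomm] at h1
    rw [hφdeg, hφmonic, one_pow, mul_one] at h1
    rw [hψdeg, hψmonic, one_mul] at h2
    rw [mul_comm] at h1
    rw [h1] at h2
    exact h2
  -- degree of the reduction is 1
  have hmapdeg : (u.map ρ).natDegree = 1 := by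
    have hc : (u.map ρ).comp (v.map ρ) = X := by
      rw [← Polynomial.map_comp, huv, map_X]
    have := congrArg natDegree hc
    rw [natDegree_comp, natDegree_X] at this
    exact Nat.eq_one_of_mul_eq_one_right this
  have hD1 : u.natDegree = 1 := by
    by_contra hD
    have hD2 : 2 ≤ u.natDegree := by omega
    have hnil' : IsNilpotent u.leadingCoeff := by
      apply hnil
      have : (u.map ρ).coeff u.natDegree = 0 :=
        coeff_eq_zero_of_natDegree_lt (by omega)
      rwa [coeff_map] at this
    have := nilp_fix hnil' (show 2 ≤ q ^ r by omega) hlead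
    exact hu0 (leadingCoeff_eq_zero.mp this)
  -- u = C c * X
  set c : A := u.coeff 1 with hc
  have hueq : u = C c * X := by
    ext n
    rcases eq_or_ne n 1 with rfl | hn
    · simp [coeff_C_mul, coeff_X, hc]
    · have h1 : u.coeff n = 0 := by
        by_contra hcn
        have hmem := mem_support_iff.mpr hcn
        obtain ⟨i, hi⟩ := hqp n hmem
        have hle := le_natDegree_of_mem_supp n hmem
        rw [hD1] at hle
        have := pow_pos (show 0 < q by omega) i
        omega
      rw [h1, coeff_C_mul, coeff_X, if_neg (fun hh => hn hh.symm), mul_zero]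
  -- c is a unit
  have hcunit : IsUnit c := by
    rw [hueq] at huv
    have : C c * v = X := by
      rw [← huv]; simp [mul_comp]
    have := congrArg (fun P => Polynomial.coeff P 1) this
    simp only [coeff_C_mul, coeff_X_one] at this
    exact IsUnit.of_mul_eq_one _ this
  -- expand the intertwining relation
  have hexp : C c * φA = C (t * c) * X + (∑ i ∈ Finset.Icc 1 (r-1),
      C (h i * c ^ q ^ i) * X ^ q ^ i) + C (c ^ q ^ r) * X ^ q ^ r := by
    have hL : (C c * X).comp φA = C c * φA := by simp [mul_comp]
    have hR : ψA.comp (C c * X) = C (t * c) * X + (∑ i ∈ Finset.Icc 1 (r-1),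
        C (h i * c ^ q ^ i) * X ^ q ^ i) + C (c ^ q ^ r) * X ^ q ^ r := by
      rw [hψA, add_comp, add_comp, sum_comp']
      simp only [mul_comp, C_comp, X_comp, pow_comp, mul_pow, ← C_pow, ← C_mul, ← mul_assoc]
    rw [hueq] at hcomm
    rw [← hL, hcomm, hR]
  -- coefficient extraction
  have hvanish : ∀ i, 1 ≤ i → i ≤ r - 1 → i ≠ j → h i = 0 := by
    intro i₀ hi₀1 hi₀2 hi₀j
    have hmem : i₀ ∈ Finset.Icc 1 (r-1) := Finset.mem_Icc.mpr ⟨hi₀1, hi₀2⟩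
    have h0 := congrArg (fun P => Polynomial.coeff P (q ^ i₀)) hexp
    have hgt : 1 < q ^ i₀ := by have := hpowlt (show 0 < i₀ from hi₀1); simpa using this
    have hir : q ^ i₀ < q ^ r := hpowlt (by omega)
    have hij : ¬ q ^ i₀ = q ^ j := fun hh => hi₀j (hpowinj hh)
    simp only [coeff_add, coeff_C_mul, coeff_X, coeff_X_pow, hSc,
      hSc (fun i => h i * c ^ q ^ i) i₀ hmem,
      if_neg (show ¬ (1:ℕ) = q ^ i₀ by omega), if_neg hij,
      if_neg (show ¬ q ^ i₀ = q ^ r by omega), hφA, ite_true, ite_false, if_true, if_false, mul_zero, mul_one, add_zero, zero_add, zero_mul] at h0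
    have : h i₀ * c ^ q ^ i₀ = 0 := by linear_combination -h0
    exact ((hcunit.pow _).mul_left_eq_zero).mp this
  have hjeq : c = h j * c ^ q ^ j := by
    have hmem : j ∈ Finset.Icc 1 (r-1) := Finset.mem_Icc.mpr ⟨hj1, by omega⟩
    have h0 := congrArg (fun P => Polynomial.coeff P (q ^ j)) hexp
    simp only [coeff_add, coeff_C_mul, coeff_X, coeff_X_pow, hφA,
      hSc (fun i => h i * c ^ q ^ i) j hmem,
      ne1j, nejr, eq_self_iff_true, ite_true, ite_false, if_true, if_false, mul_zero, mul_one, add_zero, zero_add, zero_mul] at h0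
    linear_combination h0
  have hreq : c = c ^ q ^ r := by
    have h0 := congrArg (fun P => Polynomial.coeff P (q ^ r)) hexp
    simp only [coeff_add, coeff_C_mul, coeff_X, coeff_X_pow, hφA,
      hSr (fun i => h i * c ^ q ^ i),
      ne1r, nerj, eq_self_iff_true, ite_true, ite_false, if_true, if_false, mul_zero, mul_one, add_zero, zero_add, zero_mul] at h0
    linear_combination h0
  exact ⟨c, hcunit, hueq, hvanish, hjeq, hreq⟩

open Polynomial Finset in
lemma count_lemma {A F : Type*} [CommRing A] [Field F] (ρ : A →+* F)
    (hunit : ∀ a : A, ρ a ≠ 0 → IsUnit a)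
    {m E₁ E₂ : ℕ} (hmgcd : m = Nat.gcd E₂ E₁)
    (hm : ((m : ℕ) : F) ≠ 0)
    (a : A) (S : Set (Polynomial A))
    (hstruct : ∀ u ∈ S, ∃ c : A, IsUnit c ∧ u = C c * X ∧ c = a * c ^ (E₁ + 1) ∧
      c = c ^ (E₂ + 1)) :
    S.encard ≤ (m : ℕ∞) := by
  classical
  have hm0 : 0 < m := Nat.pos_of_ne_zero (fun h0 => hm (by simp [h0]))
  rcases S.eq_empty_or_nonempty with rfl | ⟨u₀, hu₀⟩
  · simp
  obtain ⟨c₀, hc₀u, hu₀eq, hc₀1, hc₀2⟩ := hstruct u₀ hu₀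
  -- the ratio of the scalars of two isomorphisms is an m-th root of unity
  have hw : ∀ (c c' : A) (hc : IsUnit c) (hc' : IsUnit c'),
      c = a * c ^ (E₁ + 1) → c = c ^ (E₂ + 1) → c' = a * c' ^ (E₁ + 1) → c' = c' ^ (E₂ + 1) →
      (hc'.unit * hc.unit⁻¹ : Aˣ) ^ m = 1 := by
    intro c c' hc hc' h1 h2 h1' h2'
    have hcv : (hc.unit : A) = c := hc.unit_spec
    have hcv' : (hc'.unit : A) = c' := hc'.unit_spec
    have he2 : hc.unit ^ E₂ = 1 := by
      ext
      have hA : c * c ^ E₂ = c * 1 := by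
        rw [mul_one, ← pow_succ', ← h2]
      simpa [hcv] using hc.mul_left_cancel hA
    have he2' : hc'.unit ^ E₂ = 1 := by
      ext
      have hA : c' * c' ^ E₂ = c' * 1 := by
        rw [mul_one, ← pow_succ', ← h2']
      simpa [hcv'] using hc'.mul_left_cancel hA
    have he1 : hc'.unit ^ E₁ = hc.unit ^ E₁ := by
      ext
      have hA : (c * c') * c' ^ E₁ = (c * c') * c ^ E₁ := by
        have h1c : a * c ^ (E₁ + 1) = c := h1.symm
        have h1c' : a * c' ^ (E₁ + 1) = c' := h1'.symm
        have : c * c' ^ (E₁ + 1) = c' * c ^ (E₁ + 1) := by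
          calc c * c' ^ (E₁ + 1) = (a * c ^ (E₁ + 1)) * c' ^ (E₁ + 1) := by rw [h1c]
            _ = (a * c' ^ (E₁ + 1)) * c ^ (E₁ + 1) := by ring
            _ = c' * c ^ (E₁ + 1) := by rw [h1c']
        calc (c * c') * c' ^ E₁ = c * c' ^ (E₁ + 1) := by ring
          _ = c' * c ^ (E₁ + 1) := this
          _ = (c * c') * c ^ E₁ := by ring
      simpa [hcv, hcv'] using (hc.mul hc').mul_left_cancel hA
    set w : Aˣ := hc'.unit * hc.unit⁻¹ with hwdef
    have hw2 : w ^ E₂ = 1 := by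
      rw [hwdef, mul_pow, inv_pow, he2', he2]
      simp
    have hw1 : w ^ E₁ = 1 := by
      rw [hwdef, mul_pow, inv_pow, he1]
      simp
    have hdvd : orderOf w ∣ m := by
      rw [hmgcd]
      exact Nat.dvd_gcd (orderOf_dvd_of_pow_eq_one hw2) (orderOf_dvd_of_pow_eq_one hw1)
    exact orderOf_dvd_iff_pow_eq_one.mp hdvd
  -- an m-th root of unity mapping to 1 in the residue field is 1
  have root_eq : ∀ w : Aˣ, w ^ m = 1 → ρ (w : A) = 1 → (w : A) = 1 := by
    intro w hwm hρ
    have hz : ((w : A) ^ m - 1) = 0 := by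
      have : ((w ^ m : Aˣ) : A) = 1 := by rw [hwm]; rfl
      rw [← Units.val_pow_eq_pow_val]
      simp [this]
    have hg : (∑ i ∈ Finset.range m, (w : A) ^ i) * ((w : A) - 1) = 0 := by
      rw [geom_sum_mul, hz]
    have hρs : ρ (∑ i ∈ Finset.range m, (w : A) ^ i) = (m : F) := by
      rw [map_sum]
      simp [map_pow, hρ]
    have hsu : IsUnit (∑ i ∈ Finset.range m, (w : A) ^ i) :=
      hunit _ (by rw [hρs]; exact hm)
    have := (hsu.mul_right_eq_zero).mp hg
    have := sub_eq_zero.mp this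
    exact this
  have hρc₀ : ρ c₀ ≠ 0 := ((hc₀u.map ρ)).ne_zero
  -- the scalar map is injective into the m-th roots of unity of F
  set f : Polynomial A → F := fun u => ρ (u.coeff 1) * (ρ c₀)⁻¹ with hf
  have hcoeff : ∀ (c : A), ((C c * X : Polynomial A)).coeff 1 = c := by
    intro c; simp
  have hρinv : ∀ (hc : IsUnit (c₀ : A)), ρ ((hc.unit⁻¹ : Aˣ) : A) = (ρ c₀)⁻¹ := by
    intro hc
    refine eq_inv_of_mul_eq_one_left ?_
    rw [← map_mul]
    simp [hc.unit_spec]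
  have hmaps : ∀ u ∈ S, (f u) ^ m = 1 := by
    intro u hu
    obtain ⟨c, hcu, hueq, h1, h2⟩ := hstruct u hu
    have hwm := hw c₀ c hc₀u hcu hc₀1 hc₀2 h1 h2
    have hval : f u = ρ ((hcu.unit * hc₀u.unit⁻¹ : Aˣ) : A) := by
      rw [hf]
      simp only [hueq, hcoeff]
      rw [Units.val_mul, map_mul, hcu.unit_spec, hρinv hc₀u]
    rw [hval, ← map_pow, ← Units.val_pow_eq_pow_val, hwm]
    simp
  have hinj : Set.InjOn f S := by
    intro u hu u' hu' hfe
    obtain ⟨c, hcu, hueq, h1, h2⟩ := hstruct u hu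
    obtain ⟨c', hcu', hueq', h1', h2'⟩ := hstruct u' hu'
    have hcc : ρ c = ρ c' := by
      have : ρ (u.coeff 1) * (ρ c₀)⁻¹ = ρ (u'.coeff 1) * (ρ c₀)⁻¹ := hfe
      have := mul_right_cancel₀ (inv_ne_zero hρc₀) this
      rwa [hueq, hueq', hcoeff, hcoeff] at this
    have hwm := hw c c' hcu hcu' h1 h2 h1' h2'
    have hρw : ρ ((hcu'.unit * hcu.unit⁻¹ : Aˣ) : A) = 1 := by
      rw [Units.val_mul, map_mul, hcu'.unit_spec]
      have : ρ ((hcu.unit⁻¹ : Aˣ) : A) = (ρ c)⁻¹ := by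
        refine eq_inv_of_mul_eq_one_left ?_
        rw [← map_mul]
        simp [hcu.unit_spec]
      rw [this, ← hcc]
      exact mul_inv_cancel₀ ((hcu.map ρ)).ne_zero
    have := root_eq _ hwm hρw
    have hww : (hcu'.unit * hcu.unit⁻¹ : Aˣ) = 1 := Units.ext (by simpa using this)
    have : hcu'.unit = hcu.unit := by
      rwa [mul_inv_eq_one] at hww
    have hcc' : c' = c := by
      rw [← hcu'.unit_spec, ← hcu.unit_spec, this]
    rw [hueq, hueq', hcc']
  -- conclude by counting roots of unity in F
  calc S.encard = (f '' S).encard := (hinj.encard_image).symm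
    _ ≤ (((Polynomial.nthRoots m (1 : F)).toFinset : Finset F) : Set F).encard := by
        refine Set.encard_le_encard ?_
        rintro x ⟨u, hu, rfl⟩
        simp only [Finset.coe_sort_coe, Multiset.mem_toFinset, Finset.mem_coe]
        exact (Polynomial.mem_nthRoots hm0).mpr (hmaps u hu)
    _ = (((Polynomial.nthRoots m (1 : F)).toFinset.card : ℕ) : ℕ∞) :=
        Set.encard_coe_eq_coe_finsetCard _
    _ ≤ (m : ℕ∞) := by
        exact_mod_cast Nat.cast_le.mpr
          ((Multiset.toFinset_card_le _).trans (Polynomial.card_nthRoots m (1 : F)))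

open Polynomial in
theorem stmt19 (p : ℕ) (hp : p.Prime) (e : ℕ) (he : 0 < e) (q : ℕ) (hq : q = p ^ e)
    (W : Type*) [CommRing W] [IsDomain W] [IsDiscreteValuationRing W] [CharP W p]
    [IsAdicComplete (IsLocalRing.maximalIdeal W) W]
    [IsAlgClosed (IsLocalRing.ResidueField W)]
    (μ : W) (hμ : Irreducible μ)
    (ν : W → ℕ∞) (hν0 : ν 0 = ⊤)
    (hν : ∀ (m : ℕ) (w : W), IsUnit w → ν (μ ^ m * w) = m)
    (r j : ℕ) (hr : 2 ≤ r) (hj1 : 1 ≤ j) (hj2 : j ≤ r - 1)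
    (t : W) (g g' : ℕ → W)
    (hg : g = fun i => if i = j then (1 : W) else 0)
    (φ φ' : Polynomial W)
    (hφ : φ = C t * X + X ^ q ^ j + X ^ q ^ r)
    (hφ' : φ' = C t * X + (∑ i ∈ Finset.Icc 1 (r - 1), C (g' i) * X ^ q ^ i) + X ^ q ^ r)
    (δ : ℕ → ℕ) (δr : ℕ) (hδr : 0 < δr)
    (hδ : (∑ i ∈ Finset.Icc 1 (r - 1), δ i * (q ^ i - 1)) = δr * (q ^ r - 1)) :
    ((Nat.gcd (q ^ r - 1) (q ^ j - 1) : ℕ) : ℕ∞) *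
        ν ((∏ i ∈ Finset.Icc 1 (r - 1), g i ^ δ i)
            - ∏ i ∈ Finset.Icc 1 (r - 1), g' i ^ δ i) ≥
      ((∑ i ∈ (Finset.Icc 1 (r - 1)).erase j, δ i : ℕ) : ℕ∞) *
        ⨆ N : ℕ, ∑ n ∈ Finset.Icc 1 N,
          (IsoSet q (φ.map (Ideal.Quotient.mk (Ideal.span {μ ^ n})))
            (φ'.map (Ideal.Quotient.mk (Ideal.span {μ ^ n})))).encard := by
  classical
  have hq2 : 2 ≤ q := by
    rw [hq]
    calc 2 ≤ p := hp.two_le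
      _ ≤ p ^ e := Nat.le_self_pow (by omega) p
  have hjr : j < r := by omega
  set G : ℕ := Nat.gcd (q ^ r - 1) (q ^ j - 1) with hGdef
  have hqr1 : 1 < q ^ r := Nat.one_lt_pow (by omega) hq2
  have hqj1 : 1 < q ^ j := Nat.one_lt_pow (by omega) hq2
  have hG0 : 0 < G := Nat.gcd_pos_of_pos_left _ (by omega)
  set S : ℕ := ∑ i ∈ (Finset.Icc 1 (r - 1)).erase j, δ i with hSdef
  -- setup for quotients
  have hspan_le : ∀ n : ℕ, 1 ≤ n → Ideal.span {μ ^ n} ≤ Ideal.span {μ} := by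
    intro n hn
    rw [Ideal.span_singleton_le_span_singleton]
    exact dvd_pow_self μ (by omega)
  have hmaxeq : IsLocalRing.maximalIdeal W = Ideal.span {μ} :=
    (IsDiscreteValuationRing.irreducible_iff_uniformizer μ).mp hμ
  haveI hmax : (Ideal.span {μ} : Ideal W).IsMaximal := by
    rw [← hmaxeq]; exact IsLocalRing.maximalIdeal.isMaximal W
  letI : Field (W ⧸ Ideal.span {μ}) := Ideal.Quotient.field _
  have hnontriv : ∀ n : ℕ, 1 ≤ n → Nontrivial (W ⧸ Ideal.span {μ ^ n}) := by
    intro n hn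
    refine Ideal.Quotient.nontrivial_iff.mpr ?_
    rw [Ne, Ideal.span_singleton_eq_top]
    intro hun
    exact hμ.not_isUnit (isUnit_pow_iff (by omega : n ≠ 0) |>.mp hun)
  have hnil : ∀ (n : ℕ) (hn : 1 ≤ n) (a : W ⧸ Ideal.span {μ ^ n}),
      Ideal.Quotient.factor (hspan_le n hn) a = 0 → IsNilpotent a := by
    intro n hn a ha
    obtain ⟨x, rfl⟩ := Ideal.Quotient.mk_surjective a
    rw [Ideal.Quotient.factor_mk, Ideal.Quotient.eq_zero_iff_mem,
      Ideal.mem_span_singleton] at ha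
    refine ⟨n, ?_⟩
    rw [← map_pow, Ideal.Quotient.eq_zero_iff_mem, Ideal.mem_span_singleton]
    exact pow_dvd_pow_of_dvd ha n
  have hunit : ∀ (n : ℕ) (hn : 1 ≤ n) (a : W ⧸ Ideal.span {μ ^ n}),
      Ideal.Quotient.factor (hspan_le n hn) a ≠ 0 → IsUnit a := by
    intro n hn a ha
    obtain ⟨x, rfl⟩ := Ideal.Quotient.mk_surjective a
    rw [Ideal.Quotient.factor_mk, Ne, Ideal.Quotient.eq_zero_iff_mem] at ha
    have hx : IsUnit x := by
      by_contra hxu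
      exact ha (hmaxeq ▸ (IsLocalRing.mem_maximalIdeal x).mpr hxu)
    exact hx.map _
  -- G is nonzero in the residue field
  have hpG : ¬ p ∣ G := by
    intro hdvd
    have h1 : p ∣ q ^ j - 1 := hdvd.trans (Nat.gcd_dvd_right _ _)
    have h2 : p ∣ q ^ j := by
      rw [hq, ← pow_mul]
      exact dvd_pow_self p (by positivity)
    have := (Nat.dvd_sub h2 h1)
    rw [Nat.sub_sub_self (by omega)] at this
    have := Nat.le_of_dvd one_pos this
    have := hp.two_le
    omega
  have hGW : IsUnit ((G : ℕ) : W) := by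
    have hcop : Nat.gcd p G = 1 := ((Nat.Prime.coprime_iff_not_dvd hp).mpr hpG)
    have hbez := Nat.gcd_eq_gcd_ab p G
    rw [hcop] at hbez
    have h1 : (1 : ℤ) = p * Nat.gcdA p G + G * Nat.gcdB p G := by exact_mod_cast hbez
    have h2 := congrArg (fun z : ℤ => ((z : W) : W)) h1
    push_cast at h2
    rw [CharP.cast_eq_zero W p, zero_mul, zero_add] at h2
    exact IsUnit.of_mul_eq_one _ h2.symm
  have hGF : ((G : ℕ) : W ⧸ Ideal.span {μ}) ≠ 0 := by
    have : IsUnit ((G : ℕ) : W ⧸ Ideal.span {μ}) := by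
      have := hGW.map (Ideal.Quotient.mk (Ideal.span {μ}))
      rwa [map_natCast] at this
    exact this.ne_zero
  -- reduction of φ and φ'
  have hφm : ∀ n : ℕ, φ.map (Ideal.Quotient.mk (Ideal.span {μ ^ n})) =
      C (Ideal.Quotient.mk (Ideal.span {μ ^ n}) t) * X + X ^ q ^ j + X ^ q ^ r := by
    intro n
    rw [hφ]
    simp [Polynomial.map_add, Polynomial.map_mul, Polynomial.map_pow]
  have hφ'm : ∀ n : ℕ, φ'.map (Ideal.Quotient.mk (Ideal.span {μ ^ n})) =
      C (Ideal.Quotient.mk (Ideal.span {μ ^ n}) t) * X +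
        (∑ i ∈ Finset.Icc 1 (r - 1),
          C (Ideal.Quotient.mk (Ideal.span {μ ^ n}) (g' i)) * X ^ q ^ i) + X ^ q ^ r := by
    intro n
    rw [hφ']
    rw [← Polynomial.coe_mapRingHom]
    rw [map_add, map_add, map_sum]
    simp [Polynomial.map_add, Polynomial.map_mul, Polynomial.map_pow]
  -- structure of isomorphisms at each level
  have hstruct : ∀ (n : ℕ) (hn : 1 ≤ n) (u : Polynomial (W ⧸ Ideal.span {μ ^ n})),
      u ∈ IsoSet q (φ.map (Ideal.Quotient.mk (Ideal.span {μ ^ n})))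
        (φ'.map (Ideal.Quotient.mk (Ideal.span {μ ^ n}))) →
      ∃ c, IsUnit c ∧ u = C c * X ∧
        (∀ i, 1 ≤ i → i ≤ r - 1 → i ≠ j →
          Ideal.Quotient.mk (Ideal.span {μ ^ n}) (g' i) = 0) ∧
        c = Ideal.Quotient.mk (Ideal.span {μ ^ n}) (g' j) * c ^ q ^ j ∧ c = c ^ q ^ r := by
    intro n hn u hu
    haveI := hnontriv n hn
    rw [hφm n, hφ'm n] at hu
    exact key_lemma (Ideal.Quotient.factor (hspan_le n hn)) (hnil n hn) hq2 hj1 hjr _ _ hu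
  -- divisibility consequence of a nonempty isomorphism set
  have hdiv : ∀ (n : ℕ), 1 ≤ n →
      (IsoSet q (φ.map (Ideal.Quotient.mk (Ideal.span {μ ^ n})))
        (φ'.map (Ideal.Quotient.mk (Ideal.span {μ ^ n})))).Nonempty →
      ∀ i, 1 ≤ i → i ≤ r - 1 → i ≠ j → μ ^ n ∣ g' i := by
    intro n hn ⟨u, hu⟩ i hi1 hi2 hij
    obtain ⟨c, _, _, hvan, _, _⟩ := hstruct n hn u hu
    have := hvan i hi1 hi2 hij
    rw [Ideal.Quotient.eq_zero_iff_mem, Ideal.mem_span_singleton] at this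
    exact this
  -- cardinality bound at each level
  have hcount : ∀ (n : ℕ), 1 ≤ n →
      (IsoSet q (φ.map (Ideal.Quotient.mk (Ideal.span {μ ^ n})))
        (φ'.map (Ideal.Quotient.mk (Ideal.span {μ ^ n})))).encard ≤ (G : ℕ∞) := by
    intro n hn
    refine count_lemma (Ideal.Quotient.factor (hspan_le n hn)) (hunit n hn)
      (E₁ := q ^ j - 1) (E₂ := q ^ r - 1) hGdef hGF
      (Ideal.Quotient.mk (Ideal.span {μ ^ n}) (g' j)) _ ?_
    intro u hu
    obtain ⟨c, hcu, hueq, _, hcj, hcr⟩ := hstruct n hn u hu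
    refine ⟨c, hcu, hueq, ?_, ?_⟩
    · rwa [Nat.sub_add_cancel (by omega : 1 ≤ q ^ j)]
    · rwa [Nat.sub_add_cancel (by omega : 1 ≤ q ^ r)]
  -- valuation lower bounds
  have hpowbd : ∀ (kk : ℕ) (w : Wˣ) (n : ℕ), μ ^ n ∣ (w : W) * μ ^ kk → n ≤ kk := by
    intro kk w n hdvd
    by_contra hnk
    have h2 : μ ^ (kk + 1) ∣ (w : W) * μ ^ kk :=
      dvd_trans (pow_dvd_pow μ (by omega)) hdvd
    obtain ⟨z, hz⟩ := h2
    have hwz : (w : W) = μ * z := by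
      have hμk : (μ : W) ^ kk ≠ 0 := pow_ne_zero _ hμ.ne_zero
      apply mul_left_cancel₀ hμk
      calc μ ^ kk * (w : W) = (w : W) * μ ^ kk := by ring
        _ = μ ^ (kk + 1) * z := hz
        _ = μ ^ kk * (μ * z) := by ring
    exact hμ.not_isUnit (isUnit_of_mul_isUnit_left (hwz ▸ w.isUnit))
  have hνge : ∀ (x : W) (m : ℕ), μ ^ m ∣ x → ((m : ℕ∞) ≤ ν x) := by
    intro x m hdvd
    rcases eq_or_ne x 0 with rfl | hx
    · rw [hν0]; exact le_top
    obtain ⟨k, w, hxw⟩ := IsDiscreteValuationRing.eq_unit_mul_pow_irreducible hx hμ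
    have hmk : m ≤ k := hpowbd k w m (hxw ▸ hdvd)
    have hνx : ν x = (k : ℕ∞) := by
      rw [hxw, mul_comm]
      exact hν k w w.isUnit
    rw [hνx]
    exact_mod_cast hmk
  -- main case distinction
  by_cases hS0 : S = 0
  · rw [hS0]
    simp only [Nat.cast_zero, zero_mul]
    exact zero_le
  · obtain ⟨i₀, hi₀mem, hi₀⟩ := Finset.exists_ne_zero_of_sum_ne_zero
      (show (∑ i ∈ (Finset.Icc 1 (r - 1)).erase j, δ i) ≠ 0 by rwa [← hSdef])
    have hi₀Icc : i₀ ∈ Finset.Icc 1 (r - 1) := Finset.mem_of_mem_erase hi₀mem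
    have hi₀j : i₀ ≠ j := Finset.ne_of_mem_erase hi₀mem
    have hi₀1 : 1 ≤ i₀ := (Finset.mem_Icc.mp hi₀Icc).1
    have hi₀2 : i₀ ≤ r - 1 := (Finset.mem_Icc.mp hi₀Icc).2
    have hgz : (∏ i ∈ Finset.Icc 1 (r - 1), g i ^ δ i) = 0 := by
      refine Finset.prod_eq_zero hi₀Icc ?_
      rw [hg]
      simp only
      rw [if_neg hi₀j]
      exact zero_pow hi₀
    by_cases hP0 : (∏ i ∈ Finset.Icc 1 (r - 1), g' i ^ δ i) = 0
    · rw [hgz, hP0, sub_zero, hν0, ENat.mul_top (by exact_mod_cast hG0.ne' : (G : ℕ∞) ≠ 0)]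
      exact le_top
    · have hg'i₀ : g' i₀ ≠ 0 := fun h0 =>
        hP0 (Finset.prod_eq_zero hi₀Icc (by rw [h0]; exact zero_pow hi₀))
      obtain ⟨k, w, hkw⟩ := IsDiscreteValuationRing.eq_unit_mul_pow_irreducible hg'i₀ hμ
      set P : ℕ → Prop := fun n => (IsoSet q (φ.map (Ideal.Quotient.mk (Ideal.span {μ ^ n})))
        (φ'.map (Ideal.Quotient.mk (Ideal.span {μ ^ n})))).Nonempty with hPdef
      have hbound : ∀ n, P n → n ≤ k := by
        intro n hn
        rcases Nat.eq_zero_or_pos n with rfl | hn1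
        · omega
        · exact hpowbd k w n (hkw ▸ hdiv n hn1 hn i₀ hi₀1 hi₀2 hi₀j)
      set M := Nat.findGreatest P k with hMdef
      have hM : ∀ n, P n → n ≤ M := fun n hn => Nat.le_findGreatest (hbound n hn) hn
      have hdivM : ∀ i ∈ (Finset.Icc 1 (r - 1)).erase j, μ ^ M ∣ g' i := by
        intro i hi
        have hiIcc : i ∈ Finset.Icc 1 (r - 1) := Finset.mem_of_mem_erase hi
        rcases Nat.eq_zero_or_pos M with hM0 | hM1
        · rw [hM0, pow_zero]; exact one_dvd _
        · have hPM : P M := by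
            have hMne : Nat.findGreatest P k ≠ 0 := by rw [← hMdef]; exact hM1.ne'
            have hex : ¬ (∀ ⦃n : ℕ⦄, 0 < n → n ≤ k → ¬ P n) := by
              intro hall
              exact hMne (Nat.findGreatest_eq_zero_iff.mpr hall)
            push_neg at hex
            obtain ⟨n, _, hnk, hPn⟩ := hex
            exact Nat.findGreatest_spec hnk hPn
          exact hdiv M hM1 hPM i (Finset.mem_Icc.mp hiIcc).1 (Finset.mem_Icc.mp hiIcc).2
            (Finset.ne_of_mem_erase hi)
      -- valuation bound
      have hdvdP : μ ^ (M * S) ∣ ((∏ i ∈ Finset.Icc 1 (r - 1), g i ^ δ i)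
          - ∏ i ∈ Finset.Icc 1 (r - 1), g' i ^ δ i) := by
        rw [hgz, zero_sub, dvd_neg]
        have h2 : (∏ i ∈ (Finset.Icc 1 (r - 1)).erase j, μ ^ (M * δ i)) ∣
            ∏ i ∈ (Finset.Icc 1 (r - 1)).erase j, g' i ^ δ i :=
          Finset.prod_dvd_prod_of_dvd _ _ (fun i hi => by
            rw [pow_mul]; exact pow_dvd_pow_of_dvd (hdivM i hi) (δ i))
        rw [Finset.prod_pow_eq_pow_sum, ← Finset.mul_sum, ← hSdef] at h2
        exact h2.trans (Finset.prod_dvd_prod_of_subset _ _ _ (Finset.erase_subset _ _))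
      have hνb : ((M * S : ℕ) : ℕ∞) ≤ ν ((∏ i ∈ Finset.Icc 1 (r - 1), g i ^ δ i)
          - ∏ i ∈ Finset.Icc 1 (r - 1), g' i ^ δ i) := hνge _ _ hdvdP
      -- the partial sums are bounded
      have hsumb : ∀ N : ℕ, (∑ n ∈ Finset.Icc 1 N,
          (IsoSet q (φ.map (Ideal.Quotient.mk (Ideal.span {μ ^ n})))
            (φ'.map (Ideal.Quotient.mk (Ideal.span {μ ^ n})))).encard) ≤ (G : ℕ∞) * (M : ℕ∞) := by
        intro N
        calc (∑ n ∈ Finset.Icc 1 N,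
            (IsoSet q (φ.map (Ideal.Quotient.mk (Ideal.span {μ ^ n})))
              (φ'.map (Ideal.Quotient.mk (Ideal.span {μ ^ n})))).encard)
            ≤ ∑ n ∈ Finset.Icc 1 N, (if n ≤ M then (G : ℕ∞) else 0) := by
              refine Finset.sum_le_sum ?_
              intro n hn
              by_cases hnM : n ≤ M
              · rw [if_pos hnM]
                exact hcount n (Finset.mem_Icc.mp hn).1
              · rw [if_neg hnM]
                have hempty : ¬ P n := fun hPn => hnM (hM n hPn)
                rw [hPdef] at hempty
                rw [Set.not_nonempty_iff_eq_empty.mp hempty, Set.encard_empty]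
          _ = ∑ n ∈ (Finset.Icc 1 N).filter (· ≤ M), (G : ℕ∞) := (Finset.sum_filter _ _).symm
          _ ≤ ∑ n ∈ Finset.Icc 1 M, (G : ℕ∞) := by
              refine Finset.sum_le_sum_of_subset ?_
              intro x hx
              simp only [Finset.mem_filter, Finset.mem_Icc] at hx ⊢
              omega
          _ = (M : ℕ∞) * (G : ℕ∞) := by
              rw [Finset.sum_const, Nat.card_Icc]
              simp [nsmul_eq_mul]
          _ = (G : ℕ∞) * (M : ℕ∞) := mul_comm _ _
      calc ((S : ℕ) : ℕ∞) * ⨆ N : ℕ, ∑ n ∈ Finset.Icc 1 N,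
            (IsoSet q (φ.map (Ideal.Quotient.mk (Ideal.span {μ ^ n})))
              (φ'.map (Ideal.Quotient.mk (Ideal.span {μ ^ n})))).encard
          ≤ (S : ℕ∞) * ((G : ℕ∞) * (M : ℕ∞)) := mul_le_mul_right (iSup_le hsumb) _
        _ = ((G : ℕ) : ℕ∞) * ((M * S : ℕ) : ℕ∞) := by push_cast; ring
        _ ≤ ((G : ℕ) : ℕ∞) * ν ((∏ i ∈ Finset.Icc 1 (r - 1), g i ^ δ i)
            - ∏ i ∈ Finset.Icc 1 (r - 1), g' i ^ δ i) := mul_le_mul_right hνb _
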